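/- Let π be a two-stack sortable permutation of length n, written as π = π_ℓ·(n)·π_r, and suppose π_r is nonempty. Then at most one element of π_ℓ is larger than the minimum of π_r. -/

import Mathlib

namespace TSP

theorem foldr_max_mem {α : Type} [LinearOrder α] (x : α) (l : List α) :
    l.foldr max x ∈ x :: l := by
  induction l with
  | nil => simp
  | cons a t ih =>
    simp only [List.foldr_cons]
    rcases max_choice a (t.foldr max x) with h | h <;> rw [h]
    · simp
    · rcases List.mem_cons.mp ih with h' | h'
      · rw [h']; simp
      · exact List.mem_cons.mpr (Or.inr (List.mem_cons.mpr (Or.inr h')))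

theorem length_takeWhile_lt {α : Type} [DecidableEq α] {m : α} {l : List α}
    (h : m ∈ l) : (l.takeWhile (· ≠ m)).length < l.length := by
  have hd : l.dropWhile (· ≠ m) ≠ [] := by
    intro hnil
    have := List.dropWhile_eq_nil_iff.mp hnil m h
    simp at this
  have hsum : (l.takeWhile (· ≠ m)).length + (l.dropWhile (· ≠ m)).length = l.length := by
    rw [← List.length_append, List.takeWhile_append_dropWhile]
  have : 0 < (l.dropWhile (· ≠ m)).length := List.length_pos_iff.mpr hd
  omega

theorem length_tail_dropWhile_lt {α : Type} [DecidableEq α] {m : α} {l : List α}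
    (h : l ≠ []) : ((l.dropWhile (· ≠ m)).tail).length < l.length := by
  have hsum : (l.takeWhile (· ≠ m)).length + (l.dropWhile (· ≠ m)).length = l.length := by
    rw [← List.length_append, List.takeWhile_append_dropWhile]
  have h2 : ((l.dropWhile (· ≠ m)).tail).length = (l.dropWhile (· ≠ m)).length - 1 :=
    List.length_tail
  have : 0 < l.length := List.length_pos_iff.mpr h
  omega

/-- The stack-sorting operator `S`: `S(ε) = ε`, and if `A` is nonempty with
largest element `m` and `A = A_L · (m) · A_R`, then `S(A) = S(A_L) · S(A_R) · (m)`. -/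
def S {α : Type} [LinearOrder α] : List α → List α
  | [] => []
  | x :: l =>
    let m := l.foldr max x
    S ((x :: l).takeWhile (· ≠ m)) ++ S (((x :: l).dropWhile (· ≠ m)).tail) ++ [m]
termination_by l => l.length
decreasing_by
  · exact length_takeWhile_lt (by simpa [List.foldr_attach] using foldr_max_mem x l)
  · exact length_tail_dropWhile_lt (by simp)

/-- The identity permutation `id_n = (1, 2, …, n)` as a list. -/
def idPerm (n : ℕ) : List ℕ := List.range' 1 n

/-- `l` is a permutation of `{1, …, n}` (viewed as a sequence). -/
def IsPermOf (n : ℕ) (l : List ℕ) : Prop := l.Perm (idPerm n)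

/-- `l` is a two-stack sortable permutation (of `{1, …, len l}`). -/
def Is2SS (l : List ℕ) : Prop := IsPermOf l.length l ∧ S (S l) = idPerm l.length

/-- `σ^{+k}`: add `k` to every entry. -/
def shift (k : ℕ) (l : List ℕ) : List ℕ := l.map (· + k)

/-- `σ^{+(k1,m,k2)}`: add `k1` to every entry strictly smaller than `m`, `k2` to the others. -/
def shift3 (k1 m k2 : ℕ) (l : List ℕ) : List ℕ :=
  l.map (fun a => if a < m then a + k1 else a + k2)

/-- Standardization `P(A)`: the permutation of `{1,…,len A}` in the same relative order. -/
def stand (l : List ℕ) : List ℕ := l.map (fun a => (l.filter (fun b => b ≤ a)).length)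

/-- Avoidance of the pattern 231: no positions `i < j < k` with `l(k) < l(i) < l(j)`. -/
def Avoids231 (l : List ℕ) : Prop :=
  ¬ ∃ i j k, i < j ∧ j < k ∧ k < l.length ∧
      l.getD k 0 < l.getD i 0 ∧ l.getD i 0 < l.getD j 0

/-- The list of values of the left-to-right maxima of `l`, in order. -/
def lrMaxima (l : List ℕ) : List ℕ :=
  ((List.range l.length).filter
    (fun i => (l.take i).all (fun b => b < l.getD i 0))).map (fun i => l.getD i 0)

/-- `lmax`: the number of left-to-right maxima. -/
def lmax (l : List ℕ) : ℕ :=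
  (List.range l.length).countP (fun i => (l.take i).all (fun b => b < l.getD i 0))

/-- `rmax`: the number of right-to-left maxima. -/
def rmax (l : List ℕ) : ℕ :=
  (List.range l.length).countP (fun i => (l.drop (i+1)).all (fun b => b < l.getD i 0))

/-- `asc`: the number of ascents. -/
def asc (l : List ℕ) : ℕ :=
  (List.range (l.length - 1)).countP (fun i => l.getD i 0 < l.getD (i+1) 0)

/-- `des`: the number of descents. -/
def des (l : List ℕ) : ℕ :=
  (List.range (l.length - 1)).countP (fun i => l.getD (i+1) 0 < l.getD i 0)

/-- `slmax(π)`: the number of left-to-right maxima of `S(π)`. -/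
def slmax (l : List ℕ) : ℕ := lmax (S l)

/-- `sldes(π)`: the number of entries `a` that precede `a - 1` in `S(π)`. -/
def sldes (l : List ℕ) : ℕ :=
  (List.range (S l).length).countP
    (fun i => ((S l).drop (i+1)).any (fun b => b + 1 = (S l).getD i 0))

/-- The construction `C1(π1, π2) = π1 · (k+ℓ+1) · π2^{+k}`. -/
def C1 (p1 p2 : List ℕ) : List ℕ :=
  p1 ++ (p1.length + p2.length + 1) :: shift p1.length p2

/-- The `i`-th left-to-right maximum `a_i` of `S(π2)` (1-indexed). -/
def lrm (p2 : List ℕ) (i : ℕ) : ℕ := (lrMaxima (S p2)).getD (i - 1) 0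

/-- The construction `C2(π1, π2, i) = π1^{+(0,k,a_i)} · (k+ℓ+1) · π2^{+(k-1,a_i+1,k)}`. -/
def C2 (p1 p2 : List ℕ) (i : ℕ) : List ℕ :=
  shift3 0 p1.length (lrm p2 i) p1 ++
    (p1.length + p2.length + 1) :: shift3 (p1.length - 1) (lrm p2 i + 1) p1.length p2

/-- The decomposition `D(π) = (P(π_ℓ), P(π_r))`, where `π = π_ℓ · (n) · π_r`
with `n` the largest entry of `π`. -/
def D (l : List ℕ) : List ℕ × List ℕ :=
  match l with
  | [] => ([], [])
  | x :: t =>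
    let m := t.foldr max x
    (stand ((x :: t).takeWhile (· ≠ m)), stand (((x :: t).dropWhile (· ≠ m)).tail))

theorem S_nil : S ([] : List ℕ) = [] := by rw [S]

theorem S_cons (x : ℕ) (t : List ℕ) :
    S (x::t) = S ((x::t).takeWhile (· ≠ t.foldr max x)) ++
      S (((x::t).dropWhile (· ≠ t.foldr max x)).tail) ++ [t.foldr max x] := by
  rw [S]

theorem le_foldr_max {y x : ℕ} {t : List ℕ} (h : y ∈ x :: t) : y ≤ t.foldr max x := by
  induction t with
  | nil => simp at h; simp [h]
  | cons a t ih =>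
    simp only [List.foldr_cons]
    rcases List.mem_cons.mp h with h' | h'
    · exact le_max_of_le_right (ih (by simp [h']))
    · rcases List.mem_cons.mp h' with h'' | h''
      · exact le_max_of_le_left h''.le
      · exact le_max_of_le_right (ih (by simp [h'']))

theorem dropWhile_mem_eq {m : ℕ} {l : List ℕ} (h : m ∈ l) :
    l.dropWhile (· ≠ m) = m :: (l.dropWhile (· ≠ m)).tail := by
  induction l with
  | nil => simp at h
  | cons a t ih =>
    by_cases ha : a = m
    · subst ha; simp [List.dropWhile_cons]
    · rw [List.dropWhile_cons]
      have hd : (decide (a ≠ m)) = true := by simp [ha]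
      rw [hd]
      simp only [if_true]
      have hmt : m ∈ t := by
        rcases List.mem_cons.mp h with h'|h'
        · exact absurd h'.symm ha
        · exact h'
      exact ih hmt

theorem S_perm : ∀ (k : ℕ) (l : List ℕ), l.length ≤ k → (S l).Perm l := by
  intro k
  induction k with
  | zero => intro l hl; rw [List.length_eq_zero_iff.mp (Nat.le_zero.mp hl)]; simp [S_nil]
  | succ k ih =>
    intro l hl
    match l with
    | [] => simp [S_nil]
    | x :: t =>
      rw [S_cons]
      set m := t.foldr max x with hm
      have hmem : m ∈ x :: t := foldr_max_mem x t
      have hlen : (x::t).length = t.length + 1 := by simp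
      have h1 : ((x::t).takeWhile (· ≠ m)).length ≤ k := by
        have := length_takeWhile_lt (m := m) hmem; omega
      have h2 : (((x::t).dropWhile (· ≠ m)).tail).length ≤ k := by
        have := length_tail_dropWhile_lt (m := m) (l := x::t) (by simp); omega
      have p1 := ih _ h1
      have p2 := ih _ h2
      have step1 : (S ((x::t).takeWhile (· ≠ m)) ++ S (((x::t).dropWhile (· ≠ m)).tail) ++ [m]).Perm
          ((x::t).takeWhile (· ≠ m) ++ (((x::t).dropWhile (· ≠ m)).tail ++ [m])) := by
        rw [List.append_assoc]
        exact p1.append (p2.append (List.Perm.refl _))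
      have step2 : ((((x::t).dropWhile (· ≠ m)).tail ++ [m])).Perm (m :: ((x::t).dropWhile (· ≠ m)).tail) :=
        List.perm_append_singleton _ _
      have step3 : ((x::t).takeWhile (· ≠ m) ++ (m :: ((x::t).dropWhile (· ≠ m)).tail)) = x :: t := by
        rw [← dropWhile_mem_eq hmem, List.takeWhile_append_dropWhile]
      exact step1.trans (((List.Perm.refl _).append step2).trans (by rw [step3]))

theorem takeWhile_split {A B : List ℕ} {mx : ℕ} (hA : mx ∉ A) :
    (A ++ mx :: B).takeWhile (· ≠ mx) = A := by
  induction A with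
  | nil => simp [List.takeWhile_cons]
  | cons a t ih =>
    have ha : a ≠ mx := fun h => hA (by simp [h])
    simp only [List.cons_append, List.takeWhile_cons]
    have hd : (decide (a ≠ mx)) = true := by simp [ha]
    rw [hd]
    simp only [if_true]
    rw [ih (fun h => hA (List.mem_cons.mpr (Or.inr h)))]

theorem dropWhile_split {A B : List ℕ} {mx : ℕ} (hA : mx ∉ A) :
    (A ++ mx :: B).dropWhile (· ≠ mx) = mx :: B := by
  induction A with
  | nil => simp [List.dropWhile_cons]
  | cons a t ih =>
    have ha : a ≠ mx := fun h => hA (by simp [h])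
    simp only [List.cons_append, List.dropWhile_cons]
    have hd : (decide (a ≠ mx)) = true := by simp [ha]
    rw [hd]
    simp only [if_true]
    exact ih (fun h => hA (List.mem_cons.mpr (Or.inr h)))

theorem S_split {A B : List ℕ} {mx : ℕ} (hmax : ∀ y ∈ A ++ mx :: B, y ≤ mx) (hA : mx ∉ A) :
    S (A ++ mx :: B) = S A ++ S B ++ [mx] := by
  obtain ⟨x, t, hxt⟩ : ∃ x t, A ++ mx :: B = x :: t := by
    cases A with
    | nil => exact ⟨mx, B, rfl⟩
    | cons a t => exact ⟨a, t ++ mx :: B, rfl⟩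
  have hmx : t.foldr max x = mx := by
    have h1 : t.foldr max x ≤ mx := hmax _ (by rw [hxt]; exact foldr_max_mem x t)
    have h2 : mx ≤ t.foldr max x := le_foldr_max (by rw [← hxt]; exact List.mem_append_right _ (List.mem_cons_self))
    omega
  rw [hxt, S_cons, hmx, ← hxt, takeWhile_split hA, dropWhile_split hA, List.tail_cons]

theorem key : ∀ (k : ℕ) (σ : List ℕ), σ.length ≤ k → (S σ).Pairwise (· < ·) →
    ∀ a b c : ℕ, [a, b, c].Sublist σ → c < a → a < b → False := by
  intro k
  induction k with
  | zero =>
    intro σ hσ _ a b c hsub _ _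
    rw [List.length_eq_zero_iff.mp (Nat.le_zero.mp hσ)] at hsub
    simpa using hsub.length_le
  | succ k ih =>
    intro σ hσ hsort a b c hsub hca hab
    match σ with
    | [] => simpa using hsub.length_le
    | x :: t =>
      set m := t.foldr max x with hm
      have hmem : m ∈ x :: t := foldr_max_mem x t
      have hmaxσ : ∀ y ∈ x :: t, y ≤ m := fun y hy => le_foldr_max hy
      clear_value m
      set L := (x::t).takeWhile (· ≠ m) with hL
      set R := ((x::t).dropWhile (· ≠ m)).tail with hR
      have hσeq : x :: t = L ++ m :: R := by
        rw [hL, hR, ← dropWhile_mem_eq hmem, List.takeWhile_append_dropWhile]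
      have hSeq : S (x::t) = S L ++ S R ++ [m] := by
        have h := S_cons x t
        rw [← hm] at h
        rw [← hL, ← hR] at h
        exact h
      have hlen : (x::t).length = t.length + 1 := by simp
      have hLlen : L.length ≤ k := by
        rw [hL]; have := length_takeWhile_lt (m := m) hmem; omega
      have hRlen : R.length ≤ k := by
        rw [hR]; have := length_tail_dropWhile_lt (m := m) (l := x::t) (by simp); omega
      clear_value L R
      rw [hSeq] at hsort
      have hsortL : (S L).Pairwise (· < ·) :=
        hsort.sublist ((List.sublist_append_left _ _).trans (List.sublist_append_left _ _))
      have hsortR : (S R).Pairwise (· < ·) :=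
        hsort.sublist ((List.sublist_append_right _ _).trans (List.sublist_append_left _ _))
      have hpermL := S_perm L.length L le_rfl
      have hpermR := S_perm R.length R le_rfl
      have hcross : ∀ u ∈ L, ∀ v ∈ R, u < v := by
        intro u hu v hv
        have h := (List.pairwise_append.mp ((List.pairwise_append.mp hsort).1)).2.2
        exact h u (hpermL.mem_iff.mpr hu) v (hpermR.mem_iff.mpr hv)
      have hmaxL : ∀ y ∈ L, y ≤ m := fun y hy => hmaxσ y (hσeq ▸ List.mem_append_left _ hy)
      rw [hσeq] at hsub
      obtain ⟨s1, s2, heq, hs1, hs2⟩ := List.sublist_append_iff.mp hsub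
      -- case on s1
      match s1, heq with
      | [], heq =>
        -- s2 = [a,b,c] <+ m :: R
        rw [List.nil_append] at heq
        subst heq
        cases hs2 with
        | cons _ h =>
          exact ih R hRlen hsortR a b c h hca hab
        | cons_cons _ h =>
          -- a = m, [b,c] <+ R
          have hb : b ∈ R := h.subset (by simp)
          have : b ≤ a := hmaxσ b (hσeq ▸ List.mem_append_right _ (List.mem_cons.mpr (Or.inr hb)))
          omega
      | [a'], heq =>
        simp only [List.cons_append, List.nil_append, List.cons.injEq] at heq
        obtain ⟨rfl, heq2⟩ := heq
        subst heq2
        have haL : a ∈ L := hs1.subset (by simp)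
        have hc : c ∈ m :: R := hs2.subset (by simp)
        rcases List.mem_cons.mp hc with rfl | hcR
        · exact absurd (hmaxL a haL) (by omega)
        · exact absurd (hcross a haL c hcR) (by omega)
      | [a', b'], heq =>
        simp only [List.cons_append, List.nil_append, List.cons.injEq] at heq
        obtain ⟨rfl, rfl, heq2⟩ := heq
        subst heq2
        have haL : a ∈ L := hs1.subset (by simp)
        have hc : c ∈ m :: R := hs2.subset (by simp)
        rcases List.mem_cons.mp hc with rfl | hcR
        · exact absurd (hmaxL a haL) (by omega)
        · exact absurd (hcross a haL c hcR) (by omega)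
      | a' :: b' :: c' :: s1', heq =>
        simp only [List.cons_append, List.cons.injEq] at heq
        obtain ⟨rfl, rfl, rfl, heq2⟩ := heq
        have hs1' : s1' = [] := by
          cases s1' with
          | nil => rfl
          | cons u v => simp at heq2
        subst hs1'
        exact ih L hLlen hsortL a b c hs1 hca hab

theorem mem_le_of_perm_range {n y : ℕ} {π : List ℕ} (hπ : π.Perm (List.range' 1 n))
    (hy : y ∈ π) : y ≤ n := by
  have := hπ.subset hy
  rw [List.mem_range'] at this
  obtain ⟨i, hi, rfl⟩ := this
  omega

theorem atMostOne_gt_min' (n : ℕ) (π πl πr : List ℕ) (hπ : IsPermOf n π)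
    (hπ2 : S (S π) = idPerm n) (hlen : π.length = n) (hsplit : π = πl ++ n :: πr)
    (hne : πr ≠ []) (m : ℕ) (hm : m ∈ πr) (hmin : ∀ y ∈ πr, m ≤ y) :
    (πl.filter (fun x => m < x)).length ≤ 1 := by
  by_contra hcon
  push_neg at hcon
  unfold IsPermOf idPerm at hπ
  unfold idPerm at hπ2
  -- basic facts
  have hnd : π.Nodup := hπ.nodup_iff.mpr (List.nodup_range')
  have hndsp : (πl ++ n :: πr).Nodup := hsplit ▸ hnd
  have hnπl : n ∉ πl := fun h => (List.disjoint_of_nodup_append hndsp) h (List.mem_cons_self)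
  have hnπr : n ∉ πr := by
    have h2 : (n :: πr).Nodup := hndsp.of_append_right
    exact (List.nodup_cons.mp h2).1
  have hπlnd : πl.Nodup := hndsp.of_append_left
  have hle : ∀ y ∈ π, y ≤ n := fun y hy => mem_le_of_perm_range hπ hy
  -- two elements of πl greater than m
  have hfnd : (πl.filter (fun x => m < x)).Nodup := hπlnd.filter _
  obtain ⟨u, v, rest, hf⟩ : ∃ u v rest, πl.filter (fun x => m < x) = u :: v :: rest := by
    match hflt : πl.filter (fun x => m < x) with
    | [] => rw [hflt] at hcon; simp at hcon
    | [u] => rw [hflt] at hcon; simp at hcon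
    | u :: v :: rest => exact ⟨u, v, rest, rfl⟩
  have huv : u ≠ v := by
    rw [hf] at hfnd
    exact (List.nodup_cons.mp hfnd).1 ∘ (fun h => h ▸ List.mem_cons_self)
  have humem : u ∈ πl ∧ m < u := by
    have : u ∈ πl.filter (fun x => m < x) := by rw [hf]; simp
    exact ⟨List.mem_of_mem_filter this, by simpa using List.of_mem_filter this⟩
  have hvmem : v ∈ πl ∧ m < v := by
    have : v ∈ πl.filter (fun x => m < x) := by rw [hf]; simp
    exact ⟨List.mem_of_mem_filter this, by simpa using List.of_mem_filter this⟩
  -- πl nonempty, max of πl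
  obtain ⟨x0, t0, hπl⟩ : ∃ x0 t0, πl = x0 :: t0 := by
    cases πl with
    | nil => exact absurd humem.1 (by simp)
    | cons a t => exact ⟨a, t, rfl⟩
  set mxl := t0.foldr max x0 with hmxl
  have hmxlmem : mxl ∈ πl := hπl ▸ foldr_max_mem x0 t0
  have hmxlmax : ∀ y ∈ πl, y ≤ mxl := fun y hy => le_foldr_max (hπl ▸ hy)
  -- the element a
  obtain ⟨a, haπl, hma, hamxl⟩ : ∃ a, a ∈ πl ∧ m < a ∧ a ≠ mxl := by
    by_cases hu : u = mxl
    · exact ⟨v, hvmem.1, hvmem.2, fun h => huv (hu.trans h.symm ▸ hu ▸ rfl)⟩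
    · exact ⟨u, humem.1, humem.2, hu⟩
  have hamxl' : a < mxl := lt_of_le_of_ne (hmxlmax a haπl) hamxl
  -- S πl ends with mxl
  have hSπl : S πl = (S ((x0::t0).takeWhile (· ≠ mxl)) ++ S (((x0::t0).dropWhile (· ≠ mxl)).tail)) ++ [mxl] := by
    rw [hπl, S_cons, ← hmxl]
  set C := S ((x0::t0).takeWhile (· ≠ mxl)) ++ S (((x0::t0).dropWhile (· ≠ mxl)).tail) with hC
  have hpermπl : (S πl).Perm πl := S_perm πl.length πl le_rfl
  have hpermπr : (S πr).Perm πr := S_perm πr.length πr le_rfl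
  have haC : a ∈ C := by
    have : a ∈ S πl := hpermπl.mem_iff.mpr haπl
    rw [hSπl] at this
    rcases List.mem_append.mp this with h | h
    · exact h
    · simp at h; exact absurd h hamxl
  have hmSπr : m ∈ S πr := hpermπr.mem_iff.mpr hm
  -- sublist
  have hsub : [a, mxl, m].Sublist (S πl ++ S πr) := by
    have h1 : [a].Sublist C := List.singleton_sublist.mpr haC
    have h2 : ([a] ++ [mxl]).Sublist (C ++ [mxl]) := h1.append (List.Sublist.refl _)
    have h3 : [m].Sublist (S πr) := List.singleton_sublist.mpr hmSπr
    have h4 := h2.append h3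
    rw [← hSπl] at h4
    exact h4
  -- S π = S πl ++ S πr ++ [n]
  have hmaxπ : ∀ y ∈ πl ++ n :: πr, y ≤ n := fun y hy => hle y (hsplit ▸ hy)
  have hSπ : S π = S πl ++ S πr ++ [n] := by
    rw [hsplit]; exact S_split hmaxπ hnπl
  -- S (S π) = S (S πl ++ S πr) ++ [n]
  have hnotmem : n ∉ S πl ++ S πr := by
    intro h
    rcases List.mem_append.mp h with h | h
    · exact hnπl (hpermπl.mem_iff.mp h)
    · exact hnπr (hpermπr.mem_iff.mp h)
  have hmax2 : ∀ y ∈ (S πl ++ S πr) ++ n :: ([] : List ℕ), y ≤ n := by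
    intro y hy
    rcases List.mem_append.mp hy with h | h
    · rcases List.mem_append.mp h with h | h
      · exact hle y (hsplit ▸ List.mem_append_left _ (hpermπl.mem_iff.mp h))
      · exact hle y (hsplit ▸ List.mem_append_right _ (List.mem_cons.mpr (Or.inr (hpermπr.mem_iff.mp h))))
    · simp at h; omega
  have hSSπ : S (S π) = S (S πl ++ S πr) ++ [n] := by
    have h := S_split (A := S πl ++ S πr) (B := []) (mx := n) (by simpa using hmax2) hnotmem
    rw [hSπ, h, S_nil]
    simp
  -- n ≥ 1 and range' decomposition
  have hn1 : 1 ≤ n := by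
    have h : (πl ++ n :: πr).length = n := by rw [← hsplit]; exact hlen
    simp at h; omega
  have hrange : List.range' 1 n = List.range' 1 (n - 1) ++ [n] := by
    have h2 : List.range' 1 (n - 1 + 1) = List.range' 1 (n - 1) ++ [1 + 1 * (n - 1)] := List.range'_concat
    have h3 : n - 1 + 1 = n := by omega
    have h4 : 1 + 1 * (n - 1) = n := by omega
    rw [h3, h4] at h2
    exact h2
  have hcancel : S (S πl ++ S πr) = List.range' 1 (n - 1) := by
    have := hπ2
    rw [hSSπ, hrange] at this
    exact List.append_inj_left' this (by simp)
  have hsorted : (S (S πl ++ S πr)).Pairwise (· < ·) := by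
    rw [hcancel]; exact List.pairwise_lt_range'
  exact key (S πl ++ S πr).length (S πl ++ S πr) le_rfl hsorted a mxl m hsub hma hamxl'

/-- Let `π` be a two-stack sortable permutation of length `n`, written as
`π = π_ℓ · (n) · π_r` with `π_r` nonempty. Then at most one element of `π_ℓ` is larger
than the minimum of `π_r`. -/
theorem atMostOne_gt_min (n : ℕ) (π πl πr : List ℕ) (hπ : IsPermOf n π)
    (hπ2 : S (S π) = idPerm n) (hlen : π.length = n) (hsplit : π = πl ++ n :: πr)
    (hne : πr ≠ []) (m : ℕ) (hm : m ∈ πr) (hmin : ∀ y ∈ πr, m ≤ y) :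
    (πl.filter (fun x => m < x)).length ≤ 1 :=
  atMostOne_gt_min' n π πl πr hπ hπ2 hlen hsplit hne m hm hmin

end TSP
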